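/- Let I, K, A : [0,∞) → ℝ be differentiable with A > 0, A' = A, K' = (n/(n-1))K, and suppose I' ≤ ((n-2)/(n-1)) I + 2J with J ≤ K on [0,∞). Then the function L(t) = (I(t) − (n-1)K(t)) / A(t)^{(n-2)/(n-1)} is monotone nonincreasing on [0,∞). -/

import Mathlib

/-- ODE monotonicity for L: if A' = A, A > 0, K' = (n/(n-1))K,
I' ≤ ((n-2)/(n-1))I + 2J with J ≤ K on [0,∞), then
L = (I − (n-1)K)/A^{(n-2)/(n-1)} is monotone nonincreasing. -/
theorem monotone_L (n : ℕ) (hn : 3 ≤ n) (I K A J I' : ℝ → ℝ)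
    (hA : ∀ t ∈ Set.Ici (0 : ℝ), HasDerivAt A (A t) t)
    (hApos : ∀ t ∈ Set.Ici (0 : ℝ), 0 < A t)
    (hK : ∀ t ∈ Set.Ici (0 : ℝ), HasDerivAt K (((n : ℝ) / ((n : ℝ) - 1)) * K t) t)
    (hI : ∀ t ∈ Set.Ici (0 : ℝ), HasDerivAt I (I' t) t)
    (hI' : ∀ t ∈ Set.Ici (0 : ℝ),
      I' t ≤ (((n : ℝ) - 2) / ((n : ℝ) - 1)) * I t + 2 * J t)
    (hJK : ∀ t ∈ Set.Ici (0 : ℝ), J t ≤ K t) :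
    AntitoneOn (fun t => (I t - ((n : ℝ) - 1) * K t) /
        A t ^ (((n : ℝ) - 2) / ((n : ℝ) - 1)))
      (Set.Ici 0) := by
  set α : ℝ := ((n : ℝ) - 2) / ((n : ℝ) - 1) with hα
  have hn1 : (2 : ℝ) ≤ (n : ℝ) - 1 := by
    have : (3 : ℝ) ≤ (n : ℝ) := by exact_mod_cast hn
    linarith
  have hne : (n : ℝ) - 1 ≠ 0 := by linarith
  -- derivative of L at each point of Ici 0
  have key : ∀ t ∈ Set.Ici (0 : ℝ),
      HasDerivAt (fun t => (I t - ((n : ℝ) - 1) * K t) / A t ^ α)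
        (((I' t - (n : ℝ) * K t) * A t ^ α -
          (I t - ((n : ℝ) - 1) * K t) * (A t * α * A t ^ (α - 1))) /
          (A t ^ α) ^ 2) t := by
    intro t ht
    have hu : HasDerivAt (fun t => I t - ((n : ℝ) - 1) * K t)
        (I' t - (n : ℝ) * K t) t := by
      have := (hI t ht).sub ((hK t ht).const_mul ((n : ℝ) - 1))
      have hc : ((n : ℝ) - 1) * ((n : ℝ) / ((n : ℝ) - 1)) = (n : ℝ) := by field_simp
      exact this.congr_deriv (by linear_combination (-(K t)) * hc)
    have hv : HasDerivAt (fun t => A t ^ α) (A t * α * A t ^ (α - 1)) t :=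
      (hA t ht).rpow_const (Or.inl (ne_of_gt (hApos t ht)))
    have := hApos t ht
    exact hu.div hv (by positivity)
  apply antitoneOn_of_deriv_nonpos (convex_Ici 0)
  · exact fun t ht => (key t ht).continuousAt.continuousWithinAt
  · intro t ht
    rw [interior_Ici] at ht
    exact (key t (Set.mem_Ici.mpr (le_of_lt ht))).differentiableAt.differentiableWithinAt
  · intro t ht
    rw [interior_Ici] at ht
    have ht' : t ∈ Set.Ici (0 : ℝ) := Set.mem_Ici.mpr (le_of_lt ht)
    rw [(key t ht').deriv]
    have hApt := hApos t ht'
    have hv : (0 : ℝ) < A t ^ α := by positivity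
    have hAA : A t ^ (α - 1) * A t = A t ^ α := by
      rw [← Real.rpow_add_one (ne_of_gt hApt)]
      norm_num
    have hvA : A t * α * A t ^ (α - 1) = α * A t ^ α := by
      linear_combination α * hAA
    apply div_nonpos_of_nonpos_of_nonneg _ (by positivity)
    rw [hvA]
    have hnum : (I' t - (n : ℝ) * K t) * A t ^ α -
        (I t - ((n : ℝ) - 1) * K t) * (α * A t ^ α)
        = (I' t - (n : ℝ) * K t - α * (I t - ((n : ℝ) - 1) * K t)) * A t ^ α := by
      ring
    rw [hnum]
    apply mul_nonpos_of_nonpos_of_nonneg _ (le_of_lt hv)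
    have h1 : I' t ≤ α * I t + 2 * J t := hI' t ht'
    have h2 : J t ≤ K t := hJK t ht'
    have h4 : α * (I t - ((n : ℝ) - 1) * K t)
        = α * I t - ((n : ℝ) - 2) * K t := by
      rw [hα]; field_simp
    linarith [h1, h2, h4]
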